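/- Let σ be the permutation of {1,...,2n} sending (1,2,3,4,...,2n-1,2n) to (i_1, n+1, i_2, n+2, ..., i_n, 2n), where (i_1,...,i_n) is a permutation of {1,...,n}. Then sgn(σ) = (-1)^{n(n-1)/2} · sgn(i_1,...,i_n), where sgn(i_1,...,i_n) is the sign of the permutation of {1,...,n} sending k to i_k. -/

import Mathlib

open Equiv Equiv.Perm Finset

/-- `sign` agrees with `signAux` on permutations of `Fin n`. -/
lemma my_sign_eq_signAux {n : ℕ} (f : Equiv.Perm (Fin n)) :
    Equiv.Perm.sign f = Equiv.Perm.signAux f := by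
  refine Equiv.Perm.swap_induction_on f (by simp [Equiv.Perm.signAux_one]) ?_
  intro f x y hxy ih
  rw [Equiv.Perm.sign_mul, Equiv.Perm.signAux_mul, ih,
    Equiv.Perm.sign_swap hxy, Equiv.Perm.signAux_swap hxy]

/-- The interleaving permutation: `2k ↦ k`, `2k+1 ↦ n+k`. -/
def interleave (n : ℕ) : Equiv.Perm (Fin (2 * n)) where
  toFun x := ⟨if x.val % 2 = 0 then x.val / 2 else n + x.val / 2, by
    have := x.isLt; split <;> omega⟩
  invFun y := ⟨if y.val < n then 2 * y.val else 2 * (y.val - n) + 1, by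
    have := y.isLt; split <;> omega⟩
  left_inv x := by
    have := x.isLt
    apply Fin.ext
    dsimp only
    split_ifs <;> omega
  right_inv y := by
    have := y.isLt
    apply Fin.ext
    dsimp only
    split_ifs <;> omega

lemma interleave_apply_val (n : ℕ) (x : Fin (2 * n)) :
    ((interleave n) x).val = if x.val % 2 = 0 then x.val / 2 else n + x.val / 2 := by
  rfl

lemma mem_interleave_filter (n : ℕ) (x : Σ _ : Fin (2 * n), Fin (2 * n)) :
    (x ∈ Finset.filter (fun x : Σ _ : Fin (2 * n), Fin (2 * n) =>
        (interleave n) x.1 ≤ (interleave n) x.2) (Equiv.Perm.finPairsLT (2 * n)))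
      ↔ x.2.val < x.1.val ∧ x.1.val % 2 = 0 ∧ x.2.val % 2 = 1 := by
  rw [Finset.mem_filter, Equiv.Perm.mem_finPairsLT]
  have h1 := x.1.isLt
  have h2 := x.2.isLt
  rw [show ((x.2 < x.1) ↔ (x.2.val < x.1.val)) from Iff.rfl,
    show (((interleave n) x.1 ≤ (interleave n) x.2)
      ↔ (((interleave n) x.1).val ≤ ((interleave n) x.2).val)) from Iff.rfl]
  rw [interleave_apply_val, interleave_apply_val]
  split_ifs <;> omega

lemma signAux_interleave (n : ℕ) :
    Equiv.Perm.signAux (interleave n) = (-1) ^ (n * (n - 1) / 2) := by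
  unfold Equiv.Perm.signAux
  rw [Finset.prod_ite (f := fun _ => (-1 : ℤˣ)) (g := fun _ => (1 : ℤˣ)),
    Finset.prod_const, Finset.prod_const, one_pow, mul_one]
  congr 1
  have hcard : (Finset.filter (fun x : Σ _ : Fin (2 * n), Fin (2 * n) =>
      (interleave n) x.1 ≤ (interleave n) x.2) (Equiv.Perm.finPairsLT (2 * n))).card
      = (Equiv.Perm.finPairsLT n).card := by
    refine Finset.card_bij'
      (fun x hx => ⟨⟨x.1.val / 2, by have := x.1.isLt; omega⟩,
        ⟨x.2.val / 2, by have := x.2.isLt; omega⟩⟩)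
      (fun y hy => ⟨⟨2 * y.1.val, by have := y.1.isLt; omega⟩,
        ⟨2 * y.2.val + 1, by have := y.2.isLt; omega⟩⟩) ?_ ?_ ?_ ?_
    · intro a ha
      rw [mem_interleave_filter] at ha
      rw [Equiv.Perm.mem_finPairsLT]
      show (a.2.val / 2 : ℕ) < a.1.val / 2
      omega
    · intro b hb
      rw [Equiv.Perm.mem_finPairsLT] at hb
      have hlt : b.2.val < b.1.val := hb
      rw [mem_interleave_filter]
      dsimp only
      omega
    · intro a ha
      rw [mem_interleave_filter] at ha
      obtain ⟨⟨a1, ha1⟩, ⟨a2, ha2⟩⟩ := a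
      dsimp only at ha ⊢
      refine Sigma.ext (Fin.ext ?_) (heq_of_eq (Fin.ext ?_)) <;> dsimp only <;> omega
    · intro b hb
      rw [Equiv.Perm.mem_finPairsLT] at hb
      have hlt : b.2.val < b.1.val := hb
      obtain ⟨⟨b1, hb1⟩, ⟨b2, hb2⟩⟩ := b
      dsimp only at hlt ⊢
      refine Sigma.ext (Fin.ext ?_) (heq_of_eq (Fin.ext ?_)) <;> dsimp only <;> omega
  rw [hcard]
  unfold Equiv.Perm.finPairsLT
  rw [Finset.card_sigma]
  have : ∀ a : Fin n, ((Finset.range a.val).attachFin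
      (fun _ hm => (Finset.mem_range.1 hm).trans a.2)).card = a.val := by
    intro a; rw [Finset.card_attachFin, Finset.card_range]
  rw [Finset.sum_congr rfl (fun a _ => this a)]
  rw [Fin.sum_univ_eq_sum_range (fun i => i) n, Finset.sum_range_id]

/-- Let `σ` be the permutation of `{1,…,2n}` sending `(1,2,3,4,…,2n-1,2n)` to
`(i₁, n+1, i₂, n+2, …, iₙ, 2n)`, where `(i₁,…,iₙ)` is the permutation `τ` of `{1,…,n}`.
Then `sgn σ = (-1)^{n(n-1)/2} · sgn τ`. -/
theorem sign_interleaved_perm (n : ℕ) (τ : Equiv.Perm (Fin n))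
    (σ : Equiv.Perm (Fin (2 * n)))
    (h1 : ∀ k : Fin n,
      σ ⟨2 * (k : ℕ), by have := k.isLt; omega⟩ =
        ⟨(τ k : ℕ), by have := (τ k).isLt; omega⟩)
    (h2 : ∀ k : Fin n,
      σ ⟨2 * (k : ℕ) + 1, by have := k.isLt; omega⟩ =
        ⟨n + (k : ℕ), by have := k.isLt; omega⟩) :
    Equiv.Perm.sign σ = (-1) ^ (n * (n - 1) / 2) * Equiv.Perm.sign τ := by
  classical
  -- embedding of `Fin n` as the first half of `Fin (2 * n)`
  let e : Fin n ≃ {x : Fin (2 * n) // x.val < n} :=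
    { toFun := fun k => ⟨⟨k.val, by have := k.isLt; omega⟩, k.isLt⟩
      invFun := fun x => ⟨x.1.val, x.2⟩
      left_inv := fun k => rfl
      right_inv := fun x => rfl }
  let A : Equiv.Perm (Fin (2 * n)) := τ.extendDomain e
  have hA1 : ∀ (x : Fin (2 * n)) (h : x.val < n),
      A x = ⟨(τ ⟨x.val, h⟩).val, by have := (τ ⟨x.val, h⟩).isLt; omega⟩ := by
    intro x h
    have := Equiv.Perm.extendDomain_apply_subtype τ e (b := x) h
    rw [this]
    rfl
  have hA2 : ∀ (x : Fin (2 * n)), ¬ (x.val < n) → A x = x := by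
    intro x h
    exact Equiv.Perm.extendDomain_apply_not_subtype τ e h
  have hdecomp : σ = A * interleave n := by
    apply Equiv.ext
    intro x
    have hx := x.isLt
    rw [Equiv.Perm.mul_apply]
    by_cases hpar : x.val % 2 = 0
    · set k : ℕ := x.val / 2 with hkdef
      have hkn : k < n := by omega
      have hxeq : x = ⟨2 * k, by omega⟩ := by
        apply Fin.ext; show x.val = 2 * k; omega
      rw [hxeq, h1 ⟨k, hkn⟩]
      have hi : (interleave n) ⟨2 * k, by omega⟩ = ⟨k, by omega⟩ := by
        apply Fin.ext
        rw [interleave_apply_val]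
        show (if (2 * k) % 2 = 0 then (2 * k) / 2 else n + (2 * k) / 2) = k
        simp only [show (2 * k) % 2 = 0 from by omega, if_true]
        omega
      rw [hi, hA1 ⟨k, by omega⟩ (show (k : ℕ) < n from hkn)]
    · set k : ℕ := x.val / 2 with hkdef
      have hkn : k < n := by omega
      have hxeq : x = ⟨2 * k + 1, by omega⟩ := by
        apply Fin.ext; show x.val = 2 * k + 1; omega
      rw [hxeq, h2 ⟨k, hkn⟩]
      have hi : (interleave n) ⟨2 * k + 1, by omega⟩ = ⟨n + k, by omega⟩ := by
        apply Fin.ext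
        rw [interleave_apply_val]
        show (if (2 * k + 1) % 2 = 0 then (2 * k + 1) / 2 else n + (2 * k + 1) / 2) = n + k
        rw [if_neg (by omega)]
        omega
      rw [hi, hA2 ⟨n + k, by omega⟩ (by show ¬ (n + k < n); omega)]
  rw [hdecomp, Equiv.Perm.sign_mul]
  have hsA : Equiv.Perm.sign A = Equiv.Perm.sign τ :=
    Equiv.Perm.sign_extendDomain τ e
  have hsI : Equiv.Perm.sign (interleave n) = (-1) ^ (n * (n - 1) / 2) := by
    rw [my_sign_eq_signAux, signAux_interleave]
  rw [hsA, hsI, mul_comm]
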